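/- Write G(θ, L) := f(θ̃(θ, L), θ, L) where f(X, θ, L) = (θ − X)^(−1/2) − L·X^2 and θ̃(θ, L) = θ − α^2/L^2. (i) Whenever θ̃(θ, L) > 0 one has the identity G(θ, L) = L·(1/α − θ̃^2) and ∂G/∂θ = −2·L·θ̃ < 0. (ii) For θ > θ* and L > L_02(θ), one has θ̃ > α^(−1/2) > 0 and ∂G/∂L = 1/α − θ̃^2 − 4·α^2·θ̃/L^2 < 0. -/

import Mathlib

open Real Set

/-- The auxiliary energy `f(X) = (θ - X)^(-1/2) - L·X²` for `0 < X < θ`, with `f(0) = 0`. -/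
noncomputable def f (θ L X : ℝ) : ℝ :=
  if X = 0 then 0 else (θ - X) ^ (-(1:ℝ)/2) - L * X ^ 2

/-- `L_d(θ) = (25/24)·√(5/3)·θ^(-5/2)`. -/
noncomputable def Ld (θ : ℝ) : ℝ := (25/24) * Real.sqrt (5/3) * θ ^ (-(5:ℝ)/2)

/-- `θ* = (5/4)·α^(-1/2)`. -/
noncomputable def θstar (α : ℝ) : ℝ := (5/4) * α ^ (-(1:ℝ)/2)

/-- `L_01(θ) = (5^(5/2)/16)·θ^(-5/2)`. -/
noncomputable def L01 (θ : ℝ) : ℝ := ((5:ℝ) ^ ((5:ℝ)/2) / 16) * θ ^ (-(5:ℝ)/2)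

/-- `L_02(θ) = α^(5/4)·(√α·θ - 1)^(-1/2)`. -/
noncomputable def L02 (α θ : ℝ) : ℝ := α ^ ((5:ℝ)/4) * (Real.sqrt α * θ - 1) ^ (-(1:ℝ)/2)

/-- `L_12(θ) = (2α³θ + 2α²√(α(αθ² - 1)))^(1/2)`. -/
noncomputable def L12 (α θ : ℝ) : ℝ :=
  Real.sqrt (2*α^3*θ + 2*α^2 * Real.sqrt (α*(α*θ^2 - 1)))

lemma rpow_helper (a l : ℝ) (ha : 0 < a) (hl : 0 < l) :
    (a^2/l^2 : ℝ) ^ (-(1:ℝ)/2) = l / a := by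
  rw [show a^2/l^2 = (a/l)^2 from (div_pow a l 2).symm,
    ← Real.rpow_natCast (a/l) 2, ← Real.rpow_mul (div_pos ha hl).le]
  norm_num
  rw [Real.rpow_neg_one, inv_div]

lemma f_eval (α θ L x : ℝ) (hα : 0 < α) (hL : 0 < L) (hx : x ≠ 0)
    (hθx : θ - x = α^2/L^2) : f θ L x = L/α - L * x^2 := by
  rw [f, if_neg hx, hθx, rpow_helper α L hα hL]

/-- Write `G(θ, L) = f(θ̃(θ, L), θ, L)` with `θ̃ = θ - α²/L²`.
(i) If `θ̃ > 0` then `G(θ, L) = L(1/α - θ̃²)` and `∂G/∂θ = -2Lθ̃ < 0`.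
(ii) For `θ > θ*` and `L > L_02(θ)`: `θ̃ > α^(-1/2) > 0` and
`∂G/∂L = 1/α - θ̃² - 4α²θ̃/L² < 0`. -/
theorem stmt_12 (α θ L : ℝ) (hα : 0 < α) (hθ : 0 < θ) (hL : 0 < L) :
    (0 < θ - α^2/L^2 →
      f θ L (θ - α^2/L^2) = L * (1/α - (θ - α^2/L^2)^2) ∧
      HasDerivAt (fun t => f t L (t - α^2/L^2)) (-2*L*(θ - α^2/L^2)) θ ∧
      -2*L*(θ - α^2/L^2) < 0) ∧
    (θstar α < θ → L02 α θ < L →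
      α ^ (-(1:ℝ)/2) < θ - α^2/L^2 ∧ (0:ℝ) < α ^ (-(1:ℝ)/2) ∧
      HasDerivAt (fun l => f θ l (θ - α^2/l^2))
        (1/α - (θ - α^2/L^2)^2 - 4*α^2*(θ - α^2/L^2)/L^2) L ∧
      1/α - (θ - α^2/L^2)^2 - 4*α^2*(θ - α^2/L^2)/L^2 < 0) := by
  have hL2 : (0:ℝ) < L^2 := by positivity
  constructor
  · intro hpos
    refine ⟨?_, ?_, ?_⟩
    · rw [f_eval α θ L _ hα hL (ne_of_gt hpos) (by ring)]
      ring
    · -- derivative in θ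
      have hg : HasDerivAt (fun t : ℝ => L/α - L*(t - α^2/L^2)^2)
          (-2*L*(θ - α^2/L^2)) θ := by
        have h1 : HasDerivAt (fun t : ℝ => t - α^2/L^2) 1 θ :=
          (hasDerivAt_id θ).sub_const _
        have h2 := ((h1.pow 2).const_mul L).const_sub (L/α)
        refine h2.congr_deriv ?_
        ring
      refine hg.congr_of_eventuallyEq ?_
      have hev : ∀ᶠ t in nhds θ, α^2/L^2 < t := eventually_gt_nhds (by linarith)
      filter_upwards [hev] with t ht
      rw [f_eval α t L _ hα hL (by linarith) (by ring)]
    · have : 0 < 2*L*(θ - α^2/L^2) := by positivity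
      linarith
  · intro hθs hL02
    have hsa : Real.sqrt α = α ^ ((1:ℝ)/2) := by
      rw [Real.sqrt_eq_rpow]
    have hainv : (0:ℝ) < α ^ (-(1:ℝ)/2) := Real.rpow_pos_of_pos hα _
    have hs : 0 < Real.sqrt α * θ - 1 := by
      have h1 : Real.sqrt α * α ^ (-(1:ℝ)/2) = 1 := by
        rw [hsa, ← Real.rpow_add hα]; norm_num
      have h2 : Real.sqrt α * θ > Real.sqrt α * ((5/4) * α ^ (-(1:ℝ)/2)) := by
        apply mul_lt_mul_of_pos_left _ (Real.sqrt_pos.mpr hα)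
        exact hθs
      nlinarith [Real.sqrt_pos.mpr hα]
    set s := Real.sqrt α * θ - 1 with hsdef
    have hL02pos : 0 < L02 α θ := by
      unfold L02; rw [← hsdef]; positivity
    -- L^2 > L02^2 = α^(5/2)/s
    have hL02sq : (L02 α θ)^2 = α ^ ((5:ℝ)/2) / s := by
      unfold L02; rw [← hsdef, mul_pow, ← Real.rpow_natCast (α ^ ((5:ℝ)/4)) 2,
        ← Real.rpow_natCast (s ^ (-(1:ℝ)/2)) 2,
        ← Real.rpow_mul hα.le, ← Real.rpow_mul hs.le]
      norm_num
      rw [Real.rpow_neg_one]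
      ring
    have hLsq : α ^ ((5:ℝ)/2) / s < L^2 := by
      rw [← hL02sq]
      exact pow_lt_pow_left₀ hL02 hL02pos.le (by norm_num) |>.trans_le le_rfl
    have key : α^2/L^2 < s / Real.sqrt α := by
      have ha52 : (0:ℝ) < α ^ ((5:ℝ)/2) := Real.rpow_pos_of_pos hα _
      rw [div_lt_div_iff₀ hL2 (Real.sqrt_pos.mpr hα)]
      have h1 : α^2 * Real.sqrt α = α ^ ((5:ℝ)/2) := by
        rw [hsa, ← Real.rpow_natCast α 2, ← Real.rpow_add hα]; norm_num
      rw [h1]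
      rw [div_lt_iff₀ hs] at hLsq
      linarith [hLsq]
    have hθt : α ^ (-(1:ℝ)/2) < θ - α^2/L^2 := by
      have h1 : s / Real.sqrt α = θ - α ^ (-(1:ℝ)/2) := by
        have hmul : α ^ (-(1:ℝ)/2) * Real.sqrt α = 1 := by
          rw [hsa, ← Real.rpow_add hα]; norm_num
        rw [hsdef]
        have hsq : Real.sqrt α ≠ 0 := ne_of_gt (Real.sqrt_pos.mpr hα)
        field_simp
        rw [neg_div] at hmul
        linear_combination hmul
      linarith [key, h1 ▸ key]
    have hθtpos : 0 < θ - α^2/L^2 := lt_trans hainv hθt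
    refine ⟨hθt, hainv, ?_, ?_⟩
    · -- derivative in l
      have h1 : HasDerivAt (fun l : ℝ => θ - α^2/l^2) (2*α^2/L^3) L := by
        have hp : HasDerivAt (fun l : ℝ => l^2) (2*L) L := by
          simpa using hasDerivAt_pow 2 L
        have hi := hp.inv (by positivity)
        have := (hi.const_mul (α^2)).const_sub θ
        refine this.congr_deriv ?_
        field_simp
      have hg : HasDerivAt (fun l : ℝ => l/α - l*(θ - α^2/l^2)^2)
          (1/α - (θ - α^2/L^2)^2 - 4*α^2*(θ - α^2/L^2)/L^2) L := by
        have h2 := ((hasDerivAt_id L).mul (h1.pow 2))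
        have h3 := ((hasDerivAt_id L).div_const α).sub h2
        refine h3.congr_deriv ?_
        simp only [id, Pi.pow_apply]
        norm_num
        have hL0 : L ≠ 0 := hL.ne'
        field_simp
        ring
      refine hg.congr_of_eventuallyEq ?_
      have hcont : ContinuousAt (fun l : ℝ => θ - α^2/l^2) L := by
        fun_prop (disch := positivity)
      have hev1 : ∀ᶠ l in nhds L, 0 < l := eventually_gt_nhds hL
      have hev2 : ∀ᶠ l in nhds L, 0 < θ - α^2/l^2 :=
        hcont.eventually (eventually_gt_nhds hθtpos)
      filter_upwards [hev1, hev2] with l hl hlt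
      rw [f_eval α θ l _ hα hl (ne_of_gt hlt) (by ring)]
    · have h1 : 1/α < (θ - α^2/L^2)^2 := by
        have : (α ^ (-(1:ℝ)/2))^2 = 1/α := by
          rw [← Real.rpow_natCast (α ^ (-(1:ℝ)/2)) 2, ← Real.rpow_mul hα.le]
          norm_num [Real.rpow_neg_one, one_div]
        nlinarith [hθt, hainv]
      have h2 : 0 < 4*α^2*(θ - α^2/L^2)/L^2 := by positivity
      linarith
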